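/- Let q ≥ 3 be an integer and let τ₁, τ₂, τ₃ ∈ (0, 1/√2). Given any standard Gaussian random vectors G₁, G₂, G₃ in ℝⁿ, the random vector τ₁G₁ + τ₂G₂ + τ₃G₃ has the same distribution as a sum H₁ + H₂ + H₃ of three standard Gaussian random vectors in ℝⁿ (with some coupling). -/

import Mathlib

open MeasureTheory ProbabilityTheory

/-- The standard Gaussian measure on `ℝⁿ`. -/
noncomputable def stdGaussian (n : ℕ) : Measure (Fin n → ℝ) :=
  Measure.pi fun _ => gaussianReal 0 1

namespace ThreeGauss

open Real
open scoped ENNReal NNReal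

lemma wd_prod {α β : Type*} [MeasurableSpace α] [MeasurableSpace β]
    (μ : Measure α) (ν : Measure β) [SigmaFinite μ] [SigmaFinite ν]
    {f : α → ℝ≥0∞} {g : β → ℝ≥0∞} (hf : Measurable f) (hg : Measurable g)
    [SigmaFinite (μ.withDensity f)] [SigmaFinite (ν.withDensity g)] :
    (μ.withDensity f).prod (ν.withDensity g)
      = (μ.prod ν).withDensity (fun p => f p.1 * g p.2) := by
  refine Measure.prod_eq fun s t hs ht => ?_
  rw [withDensity_apply _ (hs.prod ht), ← Measure.prod_restrict,
    lintegral_prod_mul hf.aemeasurable.restrict hg.aemeasurable.restrict,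
    withDensity_apply _ hs, withDensity_apply _ ht]

lemma map_wd {α β : Type*} [MeasurableSpace α] [MeasurableSpace β] (e : α ≃ᵐ β)
    (μ : Measure α) {f : β → ℝ≥0∞} (hf : Measurable f) :
    (μ.withDensity (fun x => f (e x))).map e = (μ.map e).withDensity f := by
  ext s hs
  rw [Measure.map_apply e.measurable hs, withDensity_apply _ hs,
    setLIntegral_map hs hf e.measurable, withDensity_apply _ (e.measurable hs)]

noncomputable def rotEquiv (a b : ℝ) (h : a^2 + b^2 = 1) : (ℝ × ℝ) ≃ᵐ (ℝ × ℝ) where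
  toFun p := (a * p.1 + b * p.2, -b * p.1 + a * p.2)
  invFun p := (a * p.1 - b * p.2, b * p.1 + a * p.2)
  left_inv p := by
    obtain ⟨x, y⟩ := p
    simp only [Prod.mk.injEq]
    exact ⟨by linear_combination x * h, by linear_combination y * h⟩
  right_inv p := by
    obtain ⟨x, y⟩ := p
    simp only [Prod.mk.injEq]
    exact ⟨by linear_combination x * h, by linear_combination y * h⟩
  measurable_toFun := by
    exact ((measurable_fst.const_mul a).add (measurable_snd.const_mul b)).prodMk
      ((measurable_fst.const_mul (-b)).add (measurable_snd.const_mul a))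
  measurable_invFun := by
    exact ((measurable_fst.const_mul a).sub (measurable_snd.const_mul b)).prodMk
      ((measurable_fst.const_mul b).add (measurable_snd.const_mul a))

lemma pdfReal_rot (a b x y : ℝ) (h : a^2 + b^2 = 1) :
    gaussianPDFReal 0 1 (a * x + b * y) * gaussianPDFReal 0 1 (-b * x + a * y)
      = gaussianPDFReal 0 1 x * gaussianPDFReal 0 1 y := by
  simp only [gaussianPDFReal, sub_zero, NNReal.coe_one, mul_one]
  have he : rexp (-(a * x + b * y)^2 / 2) * rexp (-(-b * x + a * y)^2 / 2)
      = rexp (-x^2 / 2) * rexp (-y^2 / 2) := by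
    rw [← Real.exp_add, ← Real.exp_add]
    congr 1
    linear_combination (-(x^2 + y^2) / 2) * h
  rw [mul_mul_mul_comm]
  conv_rhs => rw [mul_mul_mul_comm]
  rw [he]

lemma map_rot (a b : ℝ) (h : a^2 + b^2 = 1) :
    ((gaussianReal 0 1).prod (gaussianReal 0 1)).map (rotEquiv a b h)
      = (gaussianReal 0 1).prod (gaussianReal 0 1) := by
  have hsf : SigmaFinite ((volume : Measure ℝ).withDensity (gaussianPDF 0 1)) := by
    rw [← gaussianReal_of_var_ne_zero 0 one_ne_zero]; infer_instance
  have hFm : Measurable (fun p : ℝ × ℝ => gaussianPDF 0 1 p.1 * gaussianPDF 0 1 p.2) :=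
    ((measurable_gaussianPDF 0 1).comp measurable_fst).mul
      ((measurable_gaussianPDF 0 1).comp measurable_snd)
  have hprod : (gaussianReal 0 1).prod (gaussianReal 0 1)
      = (volume : Measure (ℝ × ℝ)).withDensity
          (fun p => gaussianPDF 0 1 p.1 * gaussianPDF 0 1 p.2) := by
    rw [gaussianReal_of_var_ne_zero 0 one_ne_zero, Measure.volume_eq_prod,
      wd_prod volume volume (measurable_gaussianPDF 0 1) (measurable_gaussianPDF 0 1)]
  have hF : (fun x : ℝ × ℝ =>
        gaussianPDF 0 1 ((rotEquiv a b h) x).1 * gaussianPDF 0 1 ((rotEquiv a b h) x).2)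
      = fun p => gaussianPDF 0 1 p.1 * gaussianPDF 0 1 p.2 := by
    funext p
    obtain ⟨x, y⟩ := p
    show gaussianPDF 0 1 (a * x + b * y) * gaussianPDF 0 1 (-b * x + a * y) = _
    simp only [gaussianPDF]
    rw [← ENNReal.ofReal_mul (gaussianPDFReal_nonneg _ _ _),
      ← ENNReal.ofReal_mul (gaussianPDFReal_nonneg _ _ _), pdfReal_rot a b x y h]
  have hvol : (volume : Measure (ℝ × ℝ)).map (rotEquiv a b h) = volume := by
    set lin := Matrix.toLin (Module.Basis.finTwoProd ℝ) (Module.Basis.finTwoProd ℝ) !![a, b; -b, a] with hlin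
    have hcoe : ⇑(rotEquiv a b h) = ⇑lin := by
      funext p
      rw [hlin, Matrix.toLin_finTwoProd_apply]
      rfl
    have hdet : LinearMap.det lin = 1 := by
      rw [hlin, LinearMap.det_toLin, Matrix.det_fin_two_of]
      linear_combination h
    rw [hcoe, Measure.map_linearMap_addHaar_eq_smul_addHaar volume (by rw [hdet]; norm_num)]
    simp [hdet]
  rw [hprod]
  conv_lhs => rw [← hF]
  rw [map_wd (rotEquiv a b h) volume hFm, hvol]

lemma gauss_rot (a b : ℝ) (h : a^2 + b^2 = 1) :
    ((gaussianReal 0 1).prod (gaussianReal 0 1)).map (fun p : ℝ × ℝ => a * p.1 + b * p.2)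
      = gaussianReal 0 1 := by
  have : (fun p : ℝ × ℝ => a * p.1 + b * p.2) = Prod.fst ∘ (rotEquiv a b h) := rfl
  rw [this, ← Measure.map_map measurable_fst (rotEquiv a b h).measurable, map_rot,
    Measure.map_fst_prod]
  simp

lemma gauss_comb (a b : ℝ) :
    ((gaussianReal 0 1).prod (gaussianReal 0 1)).map (fun p : ℝ × ℝ => a * p.1 + b * p.2)
      = gaussianReal 0 ⟨a^2 + b^2, by positivity⟩ := by
  by_cases h0 : a^2 + b^2 = 0
  · have ha : a = 0 := by nlinarith [sq_nonneg a, sq_nonneg b]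
    have hb : b = 0 := by nlinarith [sq_nonneg a, sq_nonneg b]
    subst ha hb
    have : (fun p : ℝ × ℝ => (0:ℝ) * p.1 + 0 * p.2) = fun _ => (0:ℝ) := by funext p; ring
    rw [this, Measure.map_const]
    have : (⟨(0:ℝ)^2 + 0^2, by positivity⟩ : ℝ≥0) = 0 := by ext; norm_num
    simp [this]
    rw [← gaussianReal_zero_var]
    rfl
  · set r := Real.sqrt (a^2 + b^2) with hrdef
    have hr2 : r^2 = a^2 + b^2 := Real.sq_sqrt (by positivity)
    have hrpos : 0 < r := Real.sqrt_pos.mpr (lt_of_le_of_ne (by positivity) (Ne.symm h0))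
    have hfun : (fun p : ℝ × ℝ => a * p.1 + b * p.2)
        = (fun x : ℝ => r * x) ∘ (fun p : ℝ × ℝ => (a / r) * p.1 + (b / r) * p.2) := by
      funext p
      simp only [Function.comp_apply]
      field_simp
    have hunit : (a / r)^2 + (b / r)^2 = 1 := by
      field_simp
      linarith [hr2]
    rw [hfun, ← Measure.map_map (f := fun p : ℝ × ℝ => (a / r) * p.1 + (b / r) * p.2) (measurable_const_mul r)
      ((measurable_fst.const_mul (a / r)).add (measurable_snd.const_mul (b / r))),
      gauss_rot _ _ hunit, gaussianReal_map_const_mul]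
    congr 1
    · ring
    · ext
      simp [hr2]
      rfl

lemma gauss_comb' (v w : ℝ≥0) :
    ((gaussianReal 0 v).prod (gaussianReal 0 w)).map (fun p : ℝ × ℝ => p.1 + p.2)
      = gaussianReal 0 (v + w) := by
  have hv : gaussianReal 0 v = (gaussianReal 0 1).map (fun x => Real.sqrt v * x) := by
    rw [gaussianReal_map_const_mul]
    congr 1
    · ring
    · ext
      simp [Real.sq_sqrt v.2]
  have hw : gaussianReal 0 w = (gaussianReal 0 1).map (fun x => Real.sqrt w * x) := by
    rw [gaussianReal_map_const_mul]
    congr 1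
    · ring
    · ext
      simp [Real.sq_sqrt w.2]
  rw [hv, hw, Measure.map_prod_map _ _ (measurable_const_mul _) (measurable_const_mul _),
    Measure.map_map (g := fun p : ℝ × ℝ => p.1 + p.2) (measurable_fst.add measurable_snd)
      ((measurable_const_mul _).prodMap (measurable_const_mul _))]
  have : ((fun p : ℝ × ℝ => p.1 + p.2) ∘ Prod.map (fun x => Real.sqrt v * x)
      (fun x => Real.sqrt w * x))
      = fun p : ℝ × ℝ => Real.sqrt v * p.1 + Real.sqrt w * p.2 := rfl
  rw [this, gauss_comb]
  congr 1
  ext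
  simp [Real.sq_sqrt v.2, Real.sq_sqrt w.2]
  rfl

lemma pi_map {n : ℕ} {α β : Type*} [MeasurableSpace α] [MeasurableSpace β]
    (μ : Fin n → Measure α) [∀ i, IsProbabilityMeasure (μ i)]
    {f : α → β} (hf : Measurable f) :
    (Measure.pi μ).map (fun x i => f (x i)) = Measure.pi (fun i => (μ i).map f) := by
  haveI : ∀ i, IsProbabilityMeasure ((μ i).map f) :=
    fun i => Measure.isProbabilityMeasure_map hf.aemeasurable
  refine (Measure.pi_eq fun s hs => ?_).symm
  have hFm : Measurable (fun (x : Fin n → α) i => f (x i)) :=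
    measurable_pi_lambda _ fun i => hf.comp (measurable_pi_apply i)
  rw [Measure.map_apply hFm (MeasurableSet.univ_pi hs)]
  have : (fun (x : Fin n → α) i => f (x i)) ⁻¹' Set.univ.pi s
      = Set.univ.pi (fun i => f ⁻¹' s i) := by
    ext x; simp
  rw [this, Measure.pi_pi]
  exact Finset.prod_congr rfl fun i _ => (Measure.map_apply hf (hs i)).symm

/-- product of n gaussians with variance v -/
noncomputable def pgR (n : ℕ) (v : ℝ≥0) : Measure (Fin n → ℝ) :=
  Measure.pi fun _ => gaussianReal 0 v

instance (n : ℕ) (v : ℝ≥0) : IsProbabilityMeasure (pgR n v) := by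
  unfold pgR; infer_instance

lemma pg_add (n : ℕ) (v w : ℝ≥0) :
    ((pgR n v).prod (pgR n w)).map (fun p => p.1 + p.2) = pgR n (v + w) := by
  have h := measurePreserving_arrowProdEquivProdArrow ℝ ℝ (Fin n)
    (fun _ => gaussianReal 0 v) (fun _ => gaussianReal 0 w)
  rw [pgR, pgR, ← h.map_eq,
    Measure.map_map (g := fun p : (Fin n → ℝ) × (Fin n → ℝ) => p.1 + p.2) (measurable_fst.add measurable_snd) h.measurable]
  have : ((fun p : (Fin n → ℝ) × (Fin n → ℝ) => p.1 + p.2)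
      ∘ (MeasurableEquiv.arrowProdEquivProdArrow ℝ ℝ (Fin n)))
      = fun (x : Fin n → ℝ × ℝ) i => (x i).1 + (x i).2 := rfl
  rw [this, pi_map _ (f := fun p : ℝ × ℝ => p.1 + p.2) (measurable_fst.add measurable_snd)]
  unfold pgR
  congr 1
  funext i
  exact gauss_comb' v w

lemma pg_smul (n : ℕ) (c : ℝ) (v : ℝ≥0) :
    (pgR n v).map (fun x => c • x) = pgR n (⟨c^2, sq_nonneg c⟩ * v) := by
  have : (fun x : Fin n → ℝ => c • x) = fun x i => c * x i := rfl
  rw [pgR, this, pi_map _ (measurable_const_mul c)]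
  unfold pgR
  congr 1
  funext i
  rw [gaussianReal_map_const_mul, mul_zero]
  rfl

lemma triple (n : ℕ) (t u v : ℝ) (h : t^2 + u^2 + v^2 = 1) :
    ((pgR n 1).prod ((pgR n 1).prod (pgR n 1))).map
      (fun p => t • p.1 + (u • p.2.1 + v • p.2.2)) = pgR n 1 := by
  have hm2 : Measurable (fun q : (Fin n → ℝ) × (Fin n → ℝ) => u • q.1 + v • q.2) :=
    (measurable_fst.const_smul u).add (measurable_snd.const_smul v)
  have step2 : ((pgR n 1).prod (pgR n 1)).map (fun q => u • q.1 + v • q.2)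
      = pgR n (⟨u^2, sq_nonneg u⟩ + ⟨v^2, sq_nonneg v⟩) := by
    have : (fun q : (Fin n → ℝ) × (Fin n → ℝ) => u • q.1 + v • q.2)
        = (fun p : (Fin n → ℝ) × (Fin n → ℝ) => p.1 + p.2)
          ∘ Prod.map (fun x => u • x) (fun x => v • x) := rfl
    rw [this, ← Measure.map_map (g := fun p : (Fin n → ℝ) × (Fin n → ℝ) => p.1 + p.2) (measurable_fst.add measurable_snd)
        ((measurable_const_smul u).prodMap (measurable_const_smul v)),
      ← Measure.map_prod_map _ _ (measurable_const_smul u) (measurable_const_smul v),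
      pg_smul, pg_smul, pg_add]
    congr 1
    ext
    show u^2*1 + v^2*1 = u^2 + v^2
    ring
  have : (fun p : (Fin n → ℝ) × ((Fin n → ℝ) × (Fin n → ℝ)) =>
        t • p.1 + (u • p.2.1 + v • p.2.2))
      = (fun p : (Fin n → ℝ) × (Fin n → ℝ) => p.1 + p.2)
        ∘ Prod.map (fun x => t • x) (fun q => u • q.1 + v • q.2) := rfl
  rw [this, ← Measure.map_map (g := fun p : (Fin n → ℝ) × (Fin n → ℝ) => p.1 + p.2) (measurable_fst.add measurable_snd)
      ((measurable_const_smul t).prodMap hm2),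
    ← Measure.map_prod_map _ _ (measurable_const_smul t) hm2,
    pg_smul, step2, pg_add]
  congr 1
  ext
  push_cast
  show t^2*1 + (u^2+v^2) = (1:ℝ)
  linarith [h]

lemma coupling (n : ℕ) {Ω : Type} [MeasurableSpace Ω] (μ : Measure Ω)
    [IsProbabilityMeasure μ] (X : Ω → Fin n → ℝ) (hX : Measurable X)
    (hXd : μ.map X = pgR n 1) (t u v : ℝ) (h : t^2 + u^2 + v^2 = 1) :
    (μ.prod ((pgR n 1).prod (pgR n 1))).map
      (fun ω => t • X ω.1 + (u • ω.2.1 + v • ω.2.2)) = pgR n 1 := by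
  have hT : Measurable (fun p : (Fin n → ℝ) × ((Fin n → ℝ) × (Fin n → ℝ)) =>
      t • p.1 + (u • p.2.1 + v • p.2.2)) :=
    (measurable_fst.const_smul t).add
      (((measurable_fst.comp measurable_snd).const_smul u).add
        ((measurable_snd.comp measurable_snd).const_smul v))
  have hfun : (fun ω : Ω × ((Fin n → ℝ) × (Fin n → ℝ)) =>
        t • X ω.1 + (u • ω.2.1 + v • ω.2.2))
      = (fun p : (Fin n → ℝ) × ((Fin n → ℝ) × (Fin n → ℝ)) =>
          t • p.1 + (u • p.2.1 + v • p.2.2)) ∘ Prod.map X id := rfl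
  rw [hfun, ← Measure.map_map hT (hX.prodMap measurable_id),
    ← Measure.map_prod_map _ _ hX measurable_id, hXd, Measure.map_id,
    triple n t u v h]

end ThreeGauss

/-- Given `τ₁, τ₂, τ₃ ∈ (0, 1/√2)` and standard Gaussian random vectors `G₁, G₂, G₃` in `ℝⁿ`,
the random vector `τ₁G₁ + τ₂G₂ + τ₃G₃` has the same distribution as the sum `H₁ + H₂ + H₃`
of three standard Gaussian random vectors (for some coupling). -/
theorem scaled_sum_of_three_gaussians_eq_sum_of_three_std_gaussians (n : ℕ)
    (τ1 τ2 τ3 : ℝ)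
    (h1 : τ1 ∈ Set.Ioo 0 (Real.sqrt 2)⁻¹) (h2 : τ2 ∈ Set.Ioo 0 (Real.sqrt 2)⁻¹)
    (h3 : τ3 ∈ Set.Ioo 0 (Real.sqrt 2)⁻¹)
    (Ω : Type) [MeasurableSpace Ω] (μ : Measure Ω) [IsProbabilityMeasure μ]
    (G1 G2 G3 : Ω → Fin n → ℝ)
    (hG1m : Measurable G1) (hG2m : Measurable G2) (hG3m : Measurable G3)
    (hG1 : μ.map G1 = stdGaussian n) (hG2 : μ.map G2 = stdGaussian n)
    (hG3 : μ.map G3 = stdGaussian n) :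
    ∃ (Ω' : Type) (_ : MeasurableSpace Ω') (μ' : Measure Ω') (_ : IsProbabilityMeasure μ')
      (H1 H2 H3 : Ω' → Fin n → ℝ), Measurable H1 ∧ Measurable H2 ∧ Measurable H3 ∧
      μ'.map H1 = stdGaussian n ∧ μ'.map H2 = stdGaussian n ∧ μ'.map H3 = stdGaussian n ∧
      μ'.map (fun ω => H1 ω + H2 ω + H3 ω) =
        μ.map (fun ω => τ1 • G1 ω + τ2 • G2 ω + τ3 • G3 ω) := by
  classical
  obtain ⟨hτ1pos, hτ1lt⟩ := h1
  obtain ⟨hτ2pos, hτ2lt⟩ := h2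
  obtain ⟨hτ3pos, hτ3lt⟩ := h3
  have hhalf : ((Real.sqrt 2)⁻¹ : ℝ)^2 = 1/2 := by
    rw [inv_pow, Real.sq_sqrt] <;> norm_num
  have ht1 : τ1^2 < 1/2 := by
    rw [← hhalf]; exact pow_lt_pow_left₀ hτ1lt hτ1pos.le two_ne_zero
  have ht2 : τ2^2 < 1/2 := by
    rw [← hhalf]; exact pow_lt_pow_left₀ hτ2lt hτ2pos.le two_ne_zero
  have ht3 : τ3^2 < 1/2 := by
    rw [← hhalf]; exact pow_lt_pow_left₀ hτ3lt hτ3pos.le two_ne_zero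
  have ht1' : 0 < τ1^2 := pow_pos hτ1pos 2
  have ht2' : 0 < τ2^2 := pow_pos hτ2pos 2
  have ht3' : 0 < τ3^2 := pow_pos hτ3pos 2
  set s1 : ℝ := 1 - τ1^2 with hs1def
  set s2 : ℝ := 1 - τ2^2 with hs2def
  set s3 : ℝ := 1 - τ3^2 with hs3def
  have hs1 : 1/2 < s1 := by rw [hs1def]; linarith
  have hs2 : 1/2 < s2 := by rw [hs2def]; linarith
  have hs3 : 1/2 < s3 := by rw [hs3def]; linarith
  have hs1' : s1 < 1 := by rw [hs1def]; linarith
  have hs2' : s2 < 1 := by rw [hs2def]; linarith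
  have hs3' : s3 < 1 := by rw [hs3def]; linarith
  set a1 : ℝ := Real.sqrt s1 with ha1def
  have ha1sq : a1^2 = s1 := Real.sq_sqrt (by linarith)
  have ha1pos : 0 < a1 := Real.sqrt_pos.mpr (by linarith)
  set b1 : ℝ := (s3 - s1 - s2) / (2 * a1) with hb1def
  have key : (s3 - s1 - s2)^2 ≤ 4 * s1 * s2 := by
    nlinarith [sq_nonneg (s1 - s2), sq_nonneg (s1 + s2 - s3)]
  have hb1sq : b1^2 = (s3 - s1 - s2)^2 / (4 * s1) := by
    rw [hb1def, div_pow, mul_pow, ha1sq]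
    norm_num
  have hb1le : b1^2 ≤ s2 := by
    rw [hb1sq, div_le_iff₀ (by linarith)]
    nlinarith [key]
  set b2 : ℝ := Real.sqrt (s2 - b1^2) with hb2def
  have hb2sq : b2^2 = s2 - b1^2 := Real.sq_sqrt (by linarith)
  have h2ab : 2 * (a1 * b1) = s3 - s1 - s2 := by
    rw [hb1def]
    field_simp
  have hsq1 : τ1^2 + a1^2 + (0:ℝ)^2 = 1 := by rw [ha1sq]; rw [hs1def]; ring
  have hsq2 : τ2^2 + b1^2 + b2^2 = 1 := by rw [hb2sq]; rw [hs2def]; ring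
  have hsq3 : τ3^2 + (-(a1 + b1))^2 + (-b2)^2 = 1 := by
    have e1 : (-(a1 + b1))^2 = a1^2 + 2*(a1*b1) + b1^2 := by ring
    rw [e1, ha1sq, h2ab, neg_sq, hb2sq, hs3def]
    ring
  -- the coupling space
  refine ⟨Ω × ((Fin n → ℝ) × (Fin n → ℝ)), inferInstance,
    μ.prod ((ThreeGauss.pgR n 1).prod (ThreeGauss.pgR n 1)), inferInstance,
    (fun ω => τ1 • G1 ω.1 + (a1 • ω.2.1 + (0:ℝ) • ω.2.2)),
    (fun ω => τ2 • G2 ω.1 + (b1 • ω.2.1 + b2 • ω.2.2)),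
    (fun ω => τ3 • G3 ω.1 + ((-(a1 + b1)) • ω.2.1 + (-b2) • ω.2.2)),
    ?_, ?_, ?_, ?_, ?_, ?_, ?_⟩
  · exact ((hG1m.comp measurable_fst).const_smul τ1).add
      (((measurable_fst.comp measurable_snd).const_smul a1).add
        ((measurable_snd.comp measurable_snd).const_smul (0:ℝ)))
  · exact ((hG2m.comp measurable_fst).const_smul τ2).add
      (((measurable_fst.comp measurable_snd).const_smul b1).add
        ((measurable_snd.comp measurable_snd).const_smul b2))
  · exact ((hG3m.comp measurable_fst).const_smul τ3).add
      (((measurable_fst.comp measurable_snd).const_smul (-(a1 + b1))).add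
        ((measurable_snd.comp measurable_snd).const_smul (-b2)))
  · exact ThreeGauss.coupling n μ G1 hG1m hG1 τ1 a1 0 hsq1
  · exact ThreeGauss.coupling n μ G2 hG2m hG2 τ2 b1 b2 hsq2
  · exact ThreeGauss.coupling n μ G3 hG3m hG3 τ3 (-(a1 + b1)) (-b2) hsq3
  · have hsum : (fun ω : Ω × ((Fin n → ℝ) × (Fin n → ℝ)) =>
          (τ1 • G1 ω.1 + (a1 • ω.2.1 + (0:ℝ) • ω.2.2))
          + (τ2 • G2 ω.1 + (b1 • ω.2.1 + b2 • ω.2.2))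
          + (τ3 • G3 ω.1 + ((-(a1 + b1)) • ω.2.1 + (-b2) • ω.2.2)))
        = (fun x => τ1 • G1 x + τ2 • G2 x + τ3 • G3 x) ∘ Prod.fst := by
      funext ω
      funext i
      simp only [Function.comp_apply, Pi.add_apply, Pi.smul_apply, smul_eq_mul]
      ring
    have hfm : Measurable (fun x => τ1 • G1 x + τ2 • G2 x + τ3 • G3 x) :=
      ((hG1m.const_smul τ1).add (hG2m.const_smul τ2)).add (hG3m.const_smul τ3)
    rw [hsum, ← Measure.map_map hfm measurable_fst, Measure.map_fst_prod]
    simp
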